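/- For any even integer n ≥ 14, the starlike tree S(n/2 − 1, n/2 − 2, 2) is transmission irregular if and only if none of the numbers 4n − 15, 4n − 7, 8n − 23 and 8n − 15 is a perfect square. -/
import Mathlib


open SimpleGraph

variable {V : Type*}

/-- The transmission of a vertex `v`: the sum of distances from `v` to all vertices. -/
noncomputable def transmission (G : SimpleGraph V) [Fintype V] (v : V) : ℕ :=
  ∑ u : V, G.dist v u

/-- The Wiener index: the sum of distances over all unordered pairs of vertices. -/
noncomputable def wienerIndex (G : SimpleGraph V) [Fintype V] : ℕ :=
  (∑ u : V, ∑ w : V, G.dist u w) / 2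

/-- A graph on at least two vertices is transmission irregular if all of its vertices
have pairwise distinct transmissions. -/
def TransIrregular (G : SimpleGraph V) [Fintype V] : Prop :=
  2 ≤ Fintype.card V ∧ Function.Injective (transmission G)

/-- The degree of a vertex. -/
noncomputable def vertexDegree (G : SimpleGraph V) (v : V) : ℕ :=
  Nat.card (G.neighborSet v)

/-- A natural number is a perfect square. -/
def IsPerfectSquare (m : ℕ) : Prop := ∃ t : ℕ, m = t * t

/-- The starlike tree `S(a, b, c)`: three pendent paths of lengths `a`, `b`, `c`
emanating from a common central vertex (vertex `0`).  The first branch consists of the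
vertices `1, …, a`, the second of `a+1, …, a+b` and the third of `a+b+1, …, a+b+c`. -/
def starlike (a b c : ℕ) : SimpleGraph (Fin (a + b + c + 1)) :=
  SimpleGraph.fromRel (fun x y =>
    (y.val = x.val + 1 ∧ x.val ≠ a ∧ x.val ≠ a + b) ∨
    (x.val = 0 ∧ (y.val = a + 1 ∨ y.val = a + b + 1)))

/-- The ordinary caterpillar `C_m(a, b)`: the path `v_1 v_2 ⋯ v_m` (vertices `0, …, m-1`)
together with one new leaf attached to `v_a` (the vertex `m`, attached to `a-1`) and one new
leaf attached to `v_b` (the vertex `m+1`, attached to `b-1`). -/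
def caterpillar2 (m a b : ℕ) : SimpleGraph (Fin (m + 2)) :=
  SimpleGraph.fromRel (fun x y =>
    (y.val = x.val + 1 ∧ y.val < m) ∨
    (x.val = a - 1 ∧ y.val = m) ∨
    (x.val = b - 1 ∧ y.val = m + 1))

/-- The variant caterpillar `C_m(a, 2; b, 1)`: the path `v_1 v_2 ⋯ v_m`
(vertices `0, …, m-1`) together with a pendent path of length two attached to `v_a`
(vertices `m` and `m+1`) and a pendent path of length one attached to `v_b`
(the vertex `m+2`). -/
def varCaterpillar (m a b : ℕ) : SimpleGraph (Fin (m + 3)) :=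
  SimpleGraph.fromRel (fun x y =>
    (y.val = x.val + 1 ∧ y.val < m) ∨
    (x.val = a - 1 ∧ y.val = m) ∨
    (x.val = m ∧ y.val = m + 1) ∨
    (x.val = b - 1 ∧ y.val = m + 2))

/-- `T` is a transmission irregular tree of order `n` attaining the maximum Wiener
index among all transmission irregular trees of order `n`. -/
def MaxTITree (n : ℕ) (T : SimpleGraph (Fin n)) : Prop :=
  T.IsTree ∧ TransIrregular T ∧
    ∀ T' : SimpleGraph (Fin n), T'.IsTree → TransIrregular T' →
      wienerIndex T' ≤ wienerIndex T

/-- The graph `X` is, up to isomorphism, the unique transmission irregular tree of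
order `n` attaining the maximum Wiener index. -/
def UniqueMaxTITree (n : ℕ) {m : ℕ} (X : SimpleGraph (Fin m)) : Prop :=
  (∃ T : SimpleGraph (Fin n), MaxTITree n T ∧ Nonempty (T ≃g X)) ∧
    ∀ T : SimpleGraph (Fin n), MaxTITree n T → Nonempty (T ≃g X)

namespace StarlikeTIAux

open Finset

def dep (a b m : ℕ) : ℕ := if m ≤ a then m else if m ≤ a + b then m - a else m - (a + b)

def sb (a b m : ℕ) : ℕ := if m = 0 then 0 else if m ≤ a then 1 else if m ≤ a + b then 2 else 3

def dd (a b x y : ℕ) : ℕ :=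
  if sb a b x = sb a b y ∨ sb a b x = 0 ∨ sb a b y = 0
  then (dep a b x - dep a b y) + (dep a b y - dep a b x)
  else dep a b x + dep a b y

def R (a b x y : ℕ) : Prop :=
  (y = x + 1 ∧ x ≠ a ∧ x ≠ a + b) ∨ (x = 0 ∧ (y = a + 1 ∨ y = a + b + 1))

def prv (a b x : ℕ) : ℕ := if dep a b x = 1 then 0 else x - 1

lemma adj_iff (a b c : ℕ) (x y : Fin (a + b + c + 1)) :
    (starlike a b c).Adj x y ↔ x.val ≠ y.val ∧ (R a b x.val y.val ∨ R a b y.val x.val) := by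
  unfold starlike R
  rw [SimpleGraph.fromRel_adj]
  constructor
  · rintro ⟨h1, h2⟩; exact ⟨by simpa [Fin.ext_iff] using h1, h2⟩
  · rintro ⟨h1, h2⟩; exact ⟨by simpa [Fin.ext_iff] using h1, h2⟩

lemma dd_self (a b x : ℕ) : dd a b x x = 0 := by simp [dd]

lemma dd_comm (a b x y : ℕ) : dd a b x y = dd a b y x := by
  unfold dd; split_ifs <;> omega

lemma dep_zero (a b : ℕ) : dep a b 0 = 0 := by simp [dep]

lemma sb_zero (a b : ℕ) : sb a b 0 = 0 := by simp [sb]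

lemma sb_eq_zero_iff (a b m : ℕ) : sb a b m = 0 ↔ m = 0 := by
  unfold sb; split_ifs <;> simp_all

lemma dep_eq_zero (a b c : ℕ) {m : ℕ} (hm : m ≤ a + b + c) (h : dep a b m = 0) : m = 0 := by
  unfold dep at h; split_ifs at h <;> omega

lemma coord_inj (a b c : ℕ) {m m' : ℕ} (hm : m ≤ a + b + c) (hm' : m' ≤ a + b + c)
    (h1 : sb a b m = sb a b m') (h2 : dep a b m = dep a b m') : m = m' := by
  unfold sb at h1; unfold dep at h2; split_ifs at h1 h2 <;> omega

lemma coordR (a b c : ℕ) (ha : 1 ≤ a) (hb : 1 ≤ b) (hc : 1 ≤ c) {y z : ℕ}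
    (hy : y ≤ a + b + c) (hz : z ≤ a + b + c) (h : R a b y z) :
    (y = 0 ∧ z ≠ 0 ∧ dep a b z = 1) ∨
      (y ≠ 0 ∧ z ≠ 0 ∧ sb a b z = sb a b y ∧ dep a b z = dep a b y + 1) := by
  unfold R at h; unfold sb dep; split_ifs <;> omega

lemma prv_spec (a b c : ℕ) (ha : 1 ≤ a) (hb : 1 ≤ b) (hc : 1 ≤ c) {x : ℕ}
    (hx : x ≤ a + b + c) (hx0 : x ≠ 0) :
    prv a b x ≤ a + b + c ∧ prv a b x ≠ x ∧ R a b (prv a b x) x ∧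
      dep a b (prv a b x) + 1 = dep a b x ∧
      (2 ≤ dep a b x → sb a b (prv a b x) = sb a b x) ∧
      (dep a b x = 1 → prv a b x = 0) := by
  unfold prv R sb dep; split_ifs <;> omega

lemma dd_lip (a b c : ℕ) (ha : 1 ≤ a) (hb : 1 ≤ b) (hc : 1 ≤ c) {x y z : ℕ}
    (hx : x ≤ a + b + c) (hy : y ≤ a + b + c) (hz : z ≤ a + b + c)
    (h : R a b y z ∨ R a b z y) :
    dd a b x z ≤ dd a b x y + 1 := by
  have hs0 : sb a b 0 = 0 := sb_zero a b
  have hd0 : dep a b 0 = 0 := dep_zero a b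
  have hdx : ∀ m : ℕ, m ≤ a + b + c → m ≠ 0 → 1 ≤ dep a b m ∧ sb a b m ≠ 0 := by
    intro m hm hm0; constructor
    · unfold dep; split_ifs <;> omega
    · unfold sb; split_ifs <;> omega
  rcases h with h | h
  · rcases coordR a b c ha hb hc hy hz h with ⟨h1, h2, h3⟩ | ⟨h1, h2, h3, h4⟩
    · subst h1
      have hz' := hdx z hz h2
      unfold dd; split_ifs <;> omega
    · have hy' := hdx y hy h1
      have hz' := hdx z hz h2
      unfold dd; split_ifs <;> omega
  · rcases coordR a b c ha hb hc hz hy h with ⟨h1, h2, h3⟩ | ⟨h1, h2, h3, h4⟩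
    · subst h1
      have hy' := hdx y hy h2
      unfold dd; split_ifs <;> omega
    · have hy' := hdx y hy h2
      have hz' := hdx z hz h1
      unfold dd; split_ifs <;> omega

lemma sb_eval1 (a b : ℕ) {m : ℕ} (h1 : 1 ≤ m) (h2 : m ≤ a) :
    sb a b m = 1 ∧ dep a b m = m := by
  unfold sb dep; split_ifs <;> omega

lemma sb_eval2 (a b : ℕ) {m : ℕ} (h1 : a + 1 ≤ m) (h2 : m ≤ a + b) :
    sb a b m = 2 ∧ dep a b m = m - a := by
  unfold sb dep; split_ifs <;> omega

lemma sb_eval3 (a b : ℕ) {m : ℕ} (h1 : a + b + 1 ≤ m) :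
    sb a b m = 3 ∧ dep a b m = m - (a + b) := by
  unfold sb dep; split_ifs <;> omega

lemma dd_center_left (a b y : ℕ) : dd a b 0 y = dep a b y := by
  unfold dd; rw [if_pos (Or.inr (Or.inl (sb_zero a b))), dep_zero]; omega

lemma dd_center_right (a b x : ℕ) : dd a b x 0 = dep a b x := by
  unfold dd; rw [if_pos (Or.inr (Or.inr (sb_zero a b))), dep_zero]; omega

lemma dd_same (a b : ℕ) {x y : ℕ} (h : sb a b x = sb a b y) :
    dd a b x y = (dep a b x - dep a b y) + (dep a b y - dep a b x) := by
  unfold dd; rw [if_pos (Or.inl h)]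

lemma dd_diff (a b : ℕ) {x y : ℕ} (h1 : sb a b x ≠ sb a b y) (h2 : sb a b x ≠ 0)
    (h3 : sb a b y ≠ 0) : dd a b x y = dep a b x + dep a b y := by
  unfold dd; rw [if_neg (by push_neg; exact ⟨h1, h2, h3⟩)]

section Walks

variable (a b c : ℕ)

lemma dd_le_length (ha : 1 ≤ a) (hb : 1 ≤ b) (hc : 1 ≤ c) :
    ∀ {x y : Fin (a+b+c+1)} (w : (starlike a b c).Walk x y), dd a b x.val y.val ≤ w.length := by
  intro x y w
  induction w with
  | nil => simp [dd_self]
  | @cons u v w hadj p ih =>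
    rw [adj_iff] at hadj
    have hu : u.val ≤ a + b + c := by omega
    have hv : v.val ≤ a + b + c := by omega
    have hw : w.val ≤ a + b + c := by omega
    have h1 : dd a b w.val u.val ≤ dd a b w.val v.val + 1 :=
      dd_lip a b c ha hb hc hw hv hu (hadj.2.symm.imp id id)
    rw [dd_comm] at h1
    simp only [SimpleGraph.Walk.length_cons]
    have := dd_comm a b w.val v.val
    omega

lemma walk_down (ha : 1 ≤ a) (hb : 1 ≤ b) (hc : 1 ≤ c) :
    ∀ (k : ℕ) (y x : Fin (a+b+c+1)), (x.val = 0 ∨ sb a b x.val = sb a b y.val) →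
      dep a b x.val + k = dep a b y.val →
      ∃ w : (starlike a b c).Walk y x, w.length = k := by
  intro k
  induction k with
  | zero =>
    intro y x hsb hdep
    have : x = y := by
      apply Fin.ext
      rcases hsb with h | h
      · have hy0 : y.val = 0 := dep_eq_zero a b c (by omega) (by rw [h, dep_zero] at hdep; omega)
        omega
      · exact (coord_inj a b c (by omega) (by omega) h (by omega)).symm ▸ rfl
    exact ⟨this ▸ SimpleGraph.Walk.nil, by subst this; rfl⟩
  | succ k ih =>
    intro y x hsb hdep
    have hy0 : y.val ≠ 0 := by
      intro h
      rw [h, dep_zero] at hdep; omega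
    obtain ⟨hp1, hp2, hp3, hp4, hp5, hp6⟩ :=
      prv_spec a b c ha hb hc (show y.val ≤ a+b+c by omega) hy0
    set p : Fin (a+b+c+1) := ⟨prv a b y.val, by omega⟩ with hp
    have hadj : (starlike a b c).Adj y p := by
      rw [adj_iff]
      exact ⟨fun h => hp2 h.symm, Or.inr hp3⟩
    have hih : ∃ w : (starlike a b c).Walk p x, w.length = k := by
      apply ih p x _ (by simp only [hp]; omega)
      rcases Nat.lt_or_ge (dep a b y.val) 2 with h2 | h2
      · left
        have hd1 : dep a b y.val = 1 := by omega
        have hx0 : dep a b x.val = 0 := by omega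
        rcases hsb with h | h
        · exact h
        · exact dep_eq_zero a b c (by omega) hx0
      · rcases hsb with h | h
        · exact Or.inl h
        · exact Or.inr (h.trans (hp5 h2).symm)
    obtain ⟨w, hw⟩ := hih
    exact ⟨SimpleGraph.Walk.cons hadj w, by simp [hw]⟩

lemma dist_eq (ha : 1 ≤ a) (hb : 1 ≤ b) (hc : 1 ≤ c) (x y : Fin (a+b+c+1)) :
    (starlike a b c).dist x y = dd a b x.val y.val := by
  have hx : x.val ≤ a + b + c := by omega
  have hy : y.val ≤ a + b + c := by omega
  have hupper : ∃ w : (starlike a b c).Walk x y, w.length = dd a b x.val y.val := by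
    by_cases hcond : sb a b x.val = sb a b y.val ∨ sb a b x.val = 0 ∨ sb a b y.val = 0
    · have hdd : dd a b x.val y.val =
        (dep a b x.val - dep a b y.val) + (dep a b y.val - dep a b x.val) := by
        unfold dd; rw [if_pos hcond]
      rcases Nat.le_total (dep a b x.val) (dep a b y.val) with hle | hle
      · have hpre : x.val = 0 ∨ sb a b x.val = sb a b y.val := by
          rcases hcond with h | h | h
          · exact Or.inr h
          · exact Or.inl ((sb_eq_zero_iff a b x.val).mp h)
          · left
            have hy0 : y.val = 0 := (sb_eq_zero_iff a b y.val).mp h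
            have : dep a b y.val = 0 := by rw [hy0, dep_zero]
            exact dep_eq_zero a b c hx (by omega)
        obtain ⟨w, hw⟩ := walk_down a b c ha hb hc
          (dep a b y.val - dep a b x.val) y x hpre (by omega)
        exact ⟨w.reverse, by simp [hw]; omega⟩
      · have hpre : y.val = 0 ∨ sb a b y.val = sb a b x.val := by
          rcases hcond with h | h | h
          · exact Or.inr h.symm
          · left
            have hx0 : x.val = 0 := (sb_eq_zero_iff a b x.val).mp h
            have : dep a b x.val = 0 := by rw [hx0, dep_zero]
            exact dep_eq_zero a b c hy (by omega)
          · exact Or.inl ((sb_eq_zero_iff a b y.val).mp h)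
        obtain ⟨w, hw⟩ := walk_down a b c ha hb hc
          (dep a b x.val - dep a b y.val) x y hpre (by omega)
        exact ⟨w, by omega⟩
    · push_neg at hcond
      obtain ⟨hne, hx0, hy0⟩ := hcond
      set z : Fin (a+b+c+1) := ⟨0, by omega⟩ with hz
      obtain ⟨w1, hw1⟩ := walk_down a b c ha hb hc (dep a b x.val) x z
        (Or.inl rfl) (by simp [hz, dep_zero])
      obtain ⟨w2, hw2⟩ := walk_down a b c ha hb hc (dep a b y.val) y z
        (Or.inl rfl) (by simp [hz, dep_zero])
      refine ⟨w1.append w2.reverse, ?_⟩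
      have hdd : dd a b x.val y.val = dep a b x.val + dep a b y.val := by
        unfold dd
        rw [if_neg]
        push_neg
        exact ⟨hne, hx0, hy0⟩
      simp [hw1, hw2, hdd]
  obtain ⟨w, hw⟩ := hupper
  have h1 : (starlike a b c).dist x y ≤ dd a b x.val y.val := hw ▸ SimpleGraph.dist_le w
  have hr : (starlike a b c).Reachable x y := ⟨w⟩
  obtain ⟨p, hp⟩ := hr.exists_walk_length_eq_dist
  have h2 : dd a b x.val y.val ≤ (starlike a b c).dist x y := hp ▸ dd_le_length a b c ha hb hc p
  omega

end Walks

end StarlikeTIAux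

namespace StarlikeTIAux

open Finset

lemma sum_range_add_one (m : ℕ) : 2 * ∑ t ∈ range m, (t+1) = m * (m+1) := by
  induction m with
  | zero => simp
  | succ k ih =>
    rw [Finset.sum_range_succ]
    zify at ih ⊢
    linear_combination ih

lemma gauss_rev (i : ℕ) : 2 * ∑ t ∈ range i, (i - (1+t)) = i * (i-1) := by
  have hc : ∑ t ∈ range i, (i - (1+t)) = ∑ t ∈ range i, (i - 1 - t) :=
    Finset.sum_congr rfl fun t ht => by omega
  have hr : ∑ t ∈ range i, (i - 1 - t) = ∑ t ∈ range i, t := by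
    simpa using Finset.sum_range_reflect id i
  have hg := Finset.sum_range_id_mul_two i
  rw [hc, hr]
  linarith

lemma sum_absdiff_rng (i ℓ : ℕ) (hi : i ≤ ℓ) :
    2 * ∑ t ∈ range ℓ, ((i - (1+t)) + ((1+t) - i)) = i*(i-1) + (ℓ-i)*((ℓ-i)+1) := by
  have hsplit : ∑ t ∈ range ℓ, ((i - (1+t)) + ((1+t) - i))
      = (∑ t ∈ Ico 0 i, ((i - (1+t)) + ((1+t) - i)))
        + ∑ t ∈ Ico i ℓ, ((i - (1+t)) + ((1+t) - i)) := by
    rw [Finset.range_eq_Ico,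
      ← Finset.sum_Ico_consecutive _ (show 0 ≤ i by omega) hi]
  have h1 : ∑ t ∈ Ico 0 i, ((i - (1+t)) + ((1+t) - i)) = ∑ t ∈ range i, (i - (1+t)) := by
    rw [← Finset.range_eq_Ico]
    exact Finset.sum_congr rfl fun t ht => by rw [Finset.mem_range] at ht; omega
  have h2 : ∑ t ∈ Ico i ℓ, ((i - (1+t)) + ((1+t) - i)) = ∑ s ∈ range (ℓ - i), (s+1) := by
    rw [Finset.sum_Ico_eq_sum_range]
    exact Finset.sum_congr rfl fun s hs => by omega
  have g1 := gauss_rev i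
  have g2 := sum_range_add_one (ℓ - i)
  rw [hsplit, h1, h2]
  linarith

lemma sum_lin_rng (i ℓ : ℕ) : 2 * ∑ t ∈ range ℓ, (i + (1+t)) = 2*(ℓ*i) + ℓ*(ℓ+1) := by
  have h : ∑ t ∈ range ℓ, (i + (1+t)) = (∑ t ∈ range ℓ, i) + ∑ t ∈ range ℓ, (1+t) :=
    Finset.sum_add_distrib
  have h2 : ∑ t ∈ range ℓ, i = ℓ * i := by
    rw [Finset.sum_const, Finset.card_range, smul_eq_mul]
  have h3 : ∑ t ∈ range ℓ, (1+t) = ∑ t ∈ range ℓ, (t+1) :=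
    Finset.sum_congr rfl fun t _ => by omega
  have g := sum_range_add_one ℓ
  rw [h, h2, h3]
  linarith

section TransVal

variable (a b c : ℕ)

lemma sum_split (f : ℕ → ℕ) :
    ∑ m ∈ range (a+b+c+1), f m
      = f 0 + (∑ m ∈ Ico 1 (a+1), f m) + (∑ m ∈ Ico (a+1) (a+b+1), f m)
        + (∑ m ∈ Ico (a+b+1) (a+b+c+1), f m) := by
  have h0 : ∑ m ∈ Ico 0 1, f m = f 0 := by
    rw [← Finset.range_eq_Ico, Finset.sum_range_one]
  rw [Finset.range_eq_Ico,
    ← Finset.sum_Ico_consecutive f (show (0:ℕ) ≤ a+b+1 by omega) (show a+b+1 ≤ a+b+c+1 by omega),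
    ← Finset.sum_Ico_consecutive f (show (0:ℕ) ≤ a+1 by omega) (show a+1 ≤ a+b+1 by omega),
    ← Finset.sum_Ico_consecutive f (show (0:ℕ) ≤ 1 by omega) (show (1:ℕ) ≤ a+1 by omega),
    h0]

lemma trans_as_sum (ha : 1 ≤ a) (hb : 1 ≤ b) (hc : 1 ≤ c) (x : Fin (a+b+c+1)) :
    transmission (starlike a b c) x = ∑ m ∈ range (a+b+c+1), dd a b x.val m := by
  unfold transmission
  have h1 : (∑ u : Fin (a+b+c+1), (starlike a b c).dist x u)
      = ∑ u : Fin (a+b+c+1), dd a b x.val u.val :=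
    Finset.sum_congr rfl fun u _ => by rw [dist_eq a b c ha hb hc]
  rw [h1]
  exact Fin.sum_univ_eq_sum_range (fun m => dd a b x.val m) (a+b+c+1)

lemma two_trans_center (ha : 1 ≤ a) (hb : 1 ≤ b) (hc : 1 ≤ c)
    (x : Fin (a+b+c+1)) (hx : x.val = 0) :
    2 * transmission (starlike a b c) x = a*(a+1) + b*(b+1) + c*(c+1) := by
  rw [trans_as_sum a b c ha hb hc, hx, sum_split]
  have e0 : dd a b 0 0 = 0 := dd_self a b 0
  have e1 : ∑ m ∈ Ico 1 (a+1), dd a b 0 m = ∑ t ∈ range a, (0 + (1+t)) := by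
    rw [Finset.sum_Ico_eq_sum_range, show a + 1 - 1 = a by omega]
    refine Finset.sum_congr rfl fun t ht => ?_
    rw [Finset.mem_range] at ht
    obtain ⟨hs, hd⟩ := sb_eval1 a b (show 1 ≤ 1 + t by omega) (show 1 + t ≤ a by omega)
    rw [dd_center_left a b, hd]
    try omega
  have e2 : ∑ m ∈ Ico (a+1) (a+b+1), dd a b 0 m = ∑ t ∈ range b, (0 + (1+t)) := by
    rw [Finset.sum_Ico_eq_sum_range, show a + b + 1 - (a+1) = b by omega]
    refine Finset.sum_congr rfl fun t ht => ?_
    rw [Finset.mem_range] at ht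
    obtain ⟨hs, hd⟩ := sb_eval2 a b (show a+1 ≤ a+1+t by omega) (show a+1+t ≤ a + b by omega)
    rw [dd_center_left a b, hd]
    try omega
  have e3 : ∑ m ∈ Ico (a+b+1) (a+b+c+1), dd a b 0 m = ∑ t ∈ range c, (0 + (1+t)) := by
    rw [Finset.sum_Ico_eq_sum_range, show a + b + c + 1 - (a+b+1) = c by omega]
    refine Finset.sum_congr rfl fun t ht => ?_
    rw [Finset.mem_range] at ht
    obtain ⟨hs, hd⟩ := sb_eval3 a b (show a+b+1 ≤ a+b+1+t by omega)
    rw [dd_center_left a b, hd]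
    try omega
  rw [e0, e1, e2, e3]
  have g1 := sum_lin_rng 0 a
  have g2 := sum_lin_rng 0 b
  have g3 := sum_lin_rng 0 c
  simp only [Nat.mul_zero] at g1 g2 g3
  linarith

lemma two_trans_b1 (ha : 1 ≤ a) (hb : 1 ≤ b) (hc : 1 ≤ c) {i : ℕ} (h1 : 1 ≤ i) (h2 : i ≤ a)
    (x : Fin (a+b+c+1)) (hx : x.val = i) :
    2 * transmission (starlike a b c) x
      = 2*i + (i*(i-1) + (a-i)*((a-i)+1)) + (2*(b*i) + b*(b+1)) + (2*(c*i) + c*(c+1)) := by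
  rw [trans_as_sum a b c ha hb hc, hx, sum_split]
  obtain ⟨hsx, hdx⟩ := sb_eval1 a b h1 h2
  have e0 : dd a b (i) 0 = i := by rw [dd_center_right a b, hdx]
  have e1 : ∑ m ∈ Ico 1 (a+1), dd a b (i) m = ∑ t ∈ range a, ((i - (1+t)) + ((1+t) - i)) := by
    rw [Finset.sum_Ico_eq_sum_range, show a + 1 - 1 = a by omega]
    refine Finset.sum_congr rfl fun t ht => ?_
    rw [Finset.mem_range] at ht
    obtain ⟨hs, hd⟩ := sb_eval1 a b (show 1 ≤ 1 + t by omega) (show 1 + t ≤ a by omega)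
    rw [dd_same a b (by rw [hsx, hs]), hdx, hd]
    try omega
  have e2 : ∑ m ∈ Ico (a+1) (a+b+1), dd a b (i) m = ∑ t ∈ range b, (i + (1+t)) := by
    rw [Finset.sum_Ico_eq_sum_range, show a + b + 1 - (a+1) = b by omega]
    refine Finset.sum_congr rfl fun t ht => ?_
    rw [Finset.mem_range] at ht
    obtain ⟨hs, hd⟩ := sb_eval2 a b (show a+1 ≤ a+1+t by omega) (show a+1+t ≤ a + b by omega)
    rw [dd_diff a b (by rw [hsx, hs]; omega) (by rw [hsx]; omega) (by rw [hs]; omega), hdx, hd]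
    try omega
  have e3 : ∑ m ∈ Ico (a+b+1) (a+b+c+1), dd a b (i) m = ∑ t ∈ range c, (i + (1+t)) := by
    rw [Finset.sum_Ico_eq_sum_range, show a + b + c + 1 - (a+b+1) = c by omega]
    refine Finset.sum_congr rfl fun t ht => ?_
    rw [Finset.mem_range] at ht
    obtain ⟨hs, hd⟩ := sb_eval3 a b (show a+b+1 ≤ a+b+1+t by omega)
    rw [dd_diff a b (by rw [hsx, hs]; omega) (by rw [hsx]; omega) (by rw [hs]; omega), hdx, hd]
    try omega
  rw [e0, e1, e2, e3]
  have g1 := sum_absdiff_rng i a h2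
  have g2 := sum_lin_rng i b
  have g3 := sum_lin_rng i c
  linarith

lemma two_trans_b2 (ha : 1 ≤ a) (hb : 1 ≤ b) (hc : 1 ≤ c) {i : ℕ} (h1 : 1 ≤ i) (h2 : i ≤ b)
    (x : Fin (a+b+c+1)) (hx : x.val = a + i) :
    2 * transmission (starlike a b c) x
      = 2*i + (2*(a*i) + a*(a+1)) + (i*(i-1) + (b-i)*((b-i)+1)) + (2*(c*i) + c*(c+1)) := by
  rw [trans_as_sum a b c ha hb hc, hx, sum_split]
  obtain ⟨hsx, hdx0⟩ := sb_eval2 a b (show a + 1 ≤ a + i by omega) (show a + i ≤ a + b by omega)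
  have hdx : dep a b (a+i) = i := by omega
  have e0 : dd a b (a + i) 0 = i := by rw [dd_center_right a b, hdx]
  have e1 : ∑ m ∈ Ico 1 (a+1), dd a b (a + i) m = ∑ t ∈ range a, (i + (1+t)) := by
    rw [Finset.sum_Ico_eq_sum_range, show a + 1 - 1 = a by omega]
    refine Finset.sum_congr rfl fun t ht => ?_
    rw [Finset.mem_range] at ht
    obtain ⟨hs, hd⟩ := sb_eval1 a b (show 1 ≤ 1 + t by omega) (show 1 + t ≤ a by omega)
    rw [dd_diff a b (by rw [hsx, hs]; omega) (by rw [hsx]; omega) (by rw [hs]; omega), hdx, hd]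
    try omega
  have e2 : ∑ m ∈ Ico (a+1) (a+b+1), dd a b (a + i) m = ∑ t ∈ range b, ((i - (1+t)) + ((1+t) - i)) := by
    rw [Finset.sum_Ico_eq_sum_range, show a + b + 1 - (a+1) = b by omega]
    refine Finset.sum_congr rfl fun t ht => ?_
    rw [Finset.mem_range] at ht
    obtain ⟨hs, hd⟩ := sb_eval2 a b (show a+1 ≤ a+1+t by omega) (show a+1+t ≤ a + b by omega)
    rw [dd_same a b (by rw [hsx, hs]), hdx, hd]
    try omega
  have e3 : ∑ m ∈ Ico (a+b+1) (a+b+c+1), dd a b (a + i) m = ∑ t ∈ range c, (i + (1+t)) := by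
    rw [Finset.sum_Ico_eq_sum_range, show a + b + c + 1 - (a+b+1) = c by omega]
    refine Finset.sum_congr rfl fun t ht => ?_
    rw [Finset.mem_range] at ht
    obtain ⟨hs, hd⟩ := sb_eval3 a b (show a+b+1 ≤ a+b+1+t by omega)
    rw [dd_diff a b (by rw [hsx, hs]; omega) (by rw [hsx]; omega) (by rw [hs]; omega), hdx, hd]
    try omega
  rw [e0, e1, e2, e3]
  have g1 := sum_lin_rng i a
  have g2 := sum_absdiff_rng i b h2
  have g3 := sum_lin_rng i c
  linarith

lemma two_trans_b3 (ha : 1 ≤ a) (hb : 1 ≤ b) (hc : 1 ≤ c) {i : ℕ} (h1 : 1 ≤ i) (h2 : i ≤ c)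
    (x : Fin (a+b+c+1)) (hx : x.val = a + b + i) :
    2 * transmission (starlike a b c) x
      = 2*i + (2*(a*i) + a*(a+1)) + (2*(b*i) + b*(b+1)) + (i*(i-1) + (c-i)*((c-i)+1)) := by
  rw [trans_as_sum a b c ha hb hc, hx, sum_split]
  obtain ⟨hsx, hdx0⟩ := sb_eval3 a b (show a + b + 1 ≤ a + b + i by omega)
  have hdx : dep a b (a+b+i) = i := by omega
  have e0 : dd a b (a + b + i) 0 = i := by rw [dd_center_right a b, hdx]
  have e1 : ∑ m ∈ Ico 1 (a+1), dd a b (a + b + i) m = ∑ t ∈ range a, (i + (1+t)) := by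
    rw [Finset.sum_Ico_eq_sum_range, show a + 1 - 1 = a by omega]
    refine Finset.sum_congr rfl fun t ht => ?_
    rw [Finset.mem_range] at ht
    obtain ⟨hs, hd⟩ := sb_eval1 a b (show 1 ≤ 1 + t by omega) (show 1 + t ≤ a by omega)
    rw [dd_diff a b (by rw [hsx, hs]; omega) (by rw [hsx]; omega) (by rw [hs]; omega), hdx, hd]
    try omega
  have e2 : ∑ m ∈ Ico (a+1) (a+b+1), dd a b (a + b + i) m = ∑ t ∈ range b, (i + (1+t)) := by
    rw [Finset.sum_Ico_eq_sum_range, show a + b + 1 - (a+1) = b by omega]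
    refine Finset.sum_congr rfl fun t ht => ?_
    rw [Finset.mem_range] at ht
    obtain ⟨hs, hd⟩ := sb_eval2 a b (show a+1 ≤ a+1+t by omega) (show a+1+t ≤ a + b by omega)
    rw [dd_diff a b (by rw [hsx, hs]; omega) (by rw [hsx]; omega) (by rw [hs]; omega), hdx, hd]
    try omega
  have e3 : ∑ m ∈ Ico (a+b+1) (a+b+c+1), dd a b (a + b + i) m = ∑ t ∈ range c, ((i - (1+t)) + ((1+t) - i)) := by
    rw [Finset.sum_Ico_eq_sum_range, show a + b + c + 1 - (a+b+1) = c by omega]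
    refine Finset.sum_congr rfl fun t ht => ?_
    rw [Finset.mem_range] at ht
    obtain ⟨hs, hd⟩ := sb_eval3 a b (show a+b+1 ≤ a+b+1+t by omega)
    rw [dd_same a b (by rw [hsx, hs]), hdx, hd]
    try omega
  rw [e0, e1, e2, e3]
  have g1 := sum_lin_rng i a
  have g2 := sum_lin_rng i b
  have g3 := sum_absdiff_rng i c h2
  linarith

end TransVal

end StarlikeTIAux

namespace StarlikeTIAux

lemma L11 {i j : ℕ} (h : i*(i+1) = j*(j+1)) : i = j := by
  rcases lt_trichotomy i j with h1 | h1 | h1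
  · nlinarith
  · exact h1
  · nlinarith

lemma L22 {i j : ℕ} (h : i*(i+3) = j*(j+3)) : i = j := by
  rcases lt_trichotomy i j with h1 | h1 | h1
  · nlinarith
  · exact h1
  · nlinarith

lemma L12 {i j : ℕ} (hi : 1 ≤ i) (hj : 1 ≤ j) (h : i*(i+1) = j*(j+3)) : False := by
  rcases le_or_gt i j with h1 | h1
  · nlinarith
  · nlinarith

lemma Lpos1 {i : ℕ} (hi : 1 ≤ i) : 2 ≤ i*(i+1) := by nlinarith

lemma Lpos2 {i : ℕ} (hi : 1 ≤ i) : 4 ≤ i*(i+3) := by nlinarith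

lemma sqE1 {n : ℕ} (hn : 14 ≤ n) :
    IsPerfectSquare (4*n - 15) ↔ ∃ i, 1 ≤ i ∧ 2*i ≤ n - 2 ∧ i*(i+1) = n - 4 := by
  constructor
  · rintro ⟨t, ht⟩
    rcases Nat.even_or_odd t with ⟨s, hs⟩ | ⟨i, hi⟩
    · exfalso
      subst hs
      have h4 : (s+s)*(s+s) = 4*(s*s) := by ring
      rw [h4] at ht
      generalize s*s = q at ht
      omega
    · subst hi
      have e2 : (2*i+1)*(2*i+1) = 4*(i*i) + 4*i + 1 := by ring
      rw [e2] at ht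
      have key : i*i + i = n - 4 := by generalize i*i = q at ht ⊢; omega
      have hi1 : 1 ≤ i := by
        rcases Nat.eq_zero_or_pos i with h | h
        · subst h; simp at key; omega
        · exact h
      have hb : 2*i ≤ n - 2 := by
        by_contra hcon
        push_neg at hcon
        have h7 : 7 ≤ i := by omega
        zify [show 4 ≤ n by omega, show 2 ≤ n by omega] at key hcon
        nlinarith
      exact ⟨i, hi1, hb, by nlinarith [key]⟩
  · rintro ⟨i, hi1, hib, hieq⟩
    refine ⟨2*i+1, ?_⟩
    zify [show 15 ≤ 4*n by omega, show 4 ≤ n by omega] at hieq ⊢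
    linear_combination (-4 : ℤ)*hieq

lemma sqE2 {n : ℕ} (hn : 14 ≤ n) :
    IsPerfectSquare (4*n - 7) ↔ ∃ j, 1 ≤ j ∧ 2*j ≤ n - 4 ∧ j*(j+3) = n - 4 := by
  constructor
  · rintro ⟨t, ht⟩
    rcases Nat.even_or_odd t with ⟨s, hs⟩ | ⟨u, hu⟩
    · exfalso
      subst hs
      have h4 : (s+s)*(s+s) = 4*(s*s) := by ring
      rw [h4] at ht
      generalize s*s = q at ht
      omega
    · subst hu
      have e2 : (2*u+1)*(2*u+1) = 4*(u*u) + 4*u + 1 := by ring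
      rw [e2] at ht
      have key : u*u + u = n - 2 := by generalize u*u = q at ht ⊢; omega
      have hu2 : 2 ≤ u := by
        by_contra h
        push_neg at h
        interval_cases u <;> omega
      refine ⟨u - 1, by omega, ?_, ?_⟩
      · by_contra hcon
        push_neg at hcon
        have h6 : 6 ≤ u := by omega
        zify [show 4 ≤ n by omega, show 2 ≤ n by omega, show 1 ≤ u by omega] at key hcon
        nlinarith [show (6:ℤ) ≤ (u:ℤ) by exact_mod_cast h6]
      · have e3 : (u-1)*((u-1)+3) = u*u + u - 2 := by
          zify [show 1 ≤ u by omega, show 2 ≤ u*u + u by nlinarith]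
          ring
        rw [e3]
        omega
  · rintro ⟨j, hj1, hjb, hjeq⟩
    refine ⟨2*j+3, ?_⟩
    zify [show 7 ≤ 4*n by omega, show 4 ≤ n by omega] at hjeq ⊢
    linear_combination (-4 : ℤ)*hjeq

lemma sqE3 {n : ℕ} (hn : 14 ≤ n) :
    IsPerfectSquare (8*n - 23) ↔ ∃ i, 1 ≤ i ∧ 2*i ≤ n - 2 ∧ i*(i+1) = 2*n - 6 := by
  constructor
  · rintro ⟨t, ht⟩
    rcases Nat.even_or_odd t with ⟨s, hs⟩ | ⟨i, hi⟩
    · exfalso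
      subst hs
      have h4 : (s+s)*(s+s) = 4*(s*s) := by ring
      rw [h4] at ht
      generalize s*s = q at ht
      omega
    · subst hi
      have e2 : (2*i+1)*(2*i+1) = 4*(i*i) + 4*i + 1 := by ring
      rw [e2] at ht
      have key : i*i + i = 2*n - 6 := by generalize i*i = q at ht ⊢; omega
      have hi1 : 1 ≤ i := by
        rcases Nat.eq_zero_or_pos i with h | h
        · subst h; simp at key; omega
        · exact h
      have hb : 2*i ≤ n - 2 := by
        by_contra hcon
        push_neg at hcon
        have h7 : 7 ≤ i := by omega
        zify [show 6 ≤ 2*n by omega, show 2 ≤ n by omega] at key hcon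
        nlinarith
      exact ⟨i, hi1, hb, by nlinarith [key]⟩
  · rintro ⟨i, hi1, hib, hieq⟩
    refine ⟨2*i+1, ?_⟩
    zify [show 23 ≤ 8*n by omega, show 6 ≤ 2*n by omega] at hieq ⊢
    linear_combination (-4 : ℤ)*hieq

lemma sqE4 {n : ℕ} (hn : 14 ≤ n) :
    IsPerfectSquare (8*n - 15) ↔ ∃ j, 1 ≤ j ∧ 2*j ≤ n - 4 ∧ j*(j+3) = 2*n - 6 := by
  constructor
  · rintro ⟨t, ht⟩
    rcases Nat.even_or_odd t with ⟨s, hs⟩ | ⟨u, hu⟩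
    · exfalso
      subst hs
      have h4 : (s+s)*(s+s) = 4*(s*s) := by ring
      rw [h4] at ht
      generalize s*s = q at ht
      omega
    · subst hu
      have e2 : (2*u+1)*(2*u+1) = 4*(u*u) + 4*u + 1 := by ring
      rw [e2] at ht
      have key : u*u + u = 2*n - 4 := by generalize u*u = q at ht ⊢; omega
      have hu2 : 2 ≤ u := by
        by_contra h
        push_neg at h
        interval_cases u <;> omega
      refine ⟨u - 1, by omega, ?_, ?_⟩
      · by_contra hcon
        push_neg at hcon
        have h6 : 6 ≤ u := by omega
        zify [show 4 ≤ 2*n by omega, show 4 ≤ n by omega, show 1 ≤ u by omega] at key hcon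
        nlinarith [show (6:ℤ) ≤ (u:ℤ) by exact_mod_cast h6]
      · have e3 : (u-1)*((u-1)+3) = u*u + u - 2 := by
          zify [show 1 ≤ u by omega, show 2 ≤ u*u + u by nlinarith]
          ring
        rw [e3]
        omega
  · rintro ⟨j, hj1, hjb, hjeq⟩
    refine ⟨2*j+3, ?_⟩
    zify [show 15 ≤ 8*n by omega, show 6 ≤ 2*n by omega] at hjeq ⊢
    linear_combination (-4 : ℤ)*hjeq

end StarlikeTIAux

set_option maxHeartbeats 3200000 in
/-- for any even `n ≥ 14`, the starlike tree `S(n/2 - 1, n/2 - 2, 2)` is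
transmission irregular iff none of `4n - 15`, `4n - 7`, `8n - 23`, `8n - 15` is a
perfect square. -/
theorem starlike_TI_iff_even (n : ℕ) (heven : Even n) (hn : 14 ≤ n) :
    TransIrregular (starlike (n / 2 - 1) (n / 2 - 2) 2) ↔
      (¬ IsPerfectSquare (4 * n - 15) ∧ ¬ IsPerfectSquare (4 * n - 7) ∧
        ¬ IsPerfectSquare (8 * n - 23) ∧ ¬ IsPerfectSquare (8 * n - 15)) := by
  classical
  obtain ⟨k, hk⟩ := heven
  set A := n / 2 - 1 with hA
  set B := n / 2 - 2 with hB
  have ha : 1 ≤ A := by omega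
  have hb : 1 ≤ B := by omega
  have hc : (1:ℕ) ≤ 2 := by omega
  have hAv : 2*A + 2 = n := by omega
  have hBv : 2*B + 4 = n := by omega
  have hBA : B + 1 = A := by omega
  have hABn : A + B + 3 = n := by omega
  have hbaZ : (B:ℤ) + 1 = A := by exact_mod_cast hBA
  have habnZ : (A:ℤ) + B + 3 = n := by exact_mod_cast hABn
  have tv0 : ∀ x : Fin (A+B+2+1), x.val = 0 →
      2 * transmission (starlike A B 2) x = A*(A+1) + B*(B+1) + 2*(2+1) :=
    fun x hx => StarlikeTIAux.two_trans_center A B 2 ha hb hc x hx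
  have tv1 : ∀ (i : ℕ), 1 ≤ i → i ≤ A → ∀ x : Fin (A+B+2+1), x.val = i →
      2 * transmission (starlike A B 2) x
        = (A*(A+1) + B*(B+1) + 2*(2+1)) + 2*(i*(i+1)) := by
    intro i h1 h2 x hx
    rw [StarlikeTIAux.two_trans_b1 A B 2 ha hb hc h1 h2 x hx]
    zify [h1, h2]
    linear_combination (2*(i:ℤ)) * hbaZ
  have tv2 : ∀ (i : ℕ), 1 ≤ i → i ≤ B → ∀ x : Fin (A+B+2+1), x.val = A + i →
      2 * transmission (starlike A B 2) x
        = (A*(A+1) + B*(B+1) + 2*(2+1)) + 2*(i*(i+3)) := by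
    intro i h1 h2 x hx
    rw [StarlikeTIAux.two_trans_b2 A B 2 ha hb hc h1 h2 x hx]
    zify [h1, h2]
    linear_combination (-2*(i:ℤ)) * hbaZ
  have tv3 : ∀ (i : ℕ), 1 ≤ i → i ≤ 2 → ∀ x : Fin (A+B+2+1), x.val = A + B + i →
      2 * transmission (starlike A B 2) x
        = (A*(A+1) + B*(B+1) + 2*(2+1)) + 2*(i*(i+(n-5))) := by
    intro i h1 h2 x hx
    rw [StarlikeTIAux.two_trans_b3 A B 2 ha hb hc h1 h2 x hx]
    zify [h1, h2, show 5 ≤ n by omega]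
    linear_combination (2*(i:ℤ)) * habnZ
  have card2 : 2 ≤ Fintype.card (Fin (A+B+2+1)) := by
    simp only [Fintype.card_fin]; omega
  constructor
  · rintro ⟨-, hinj⟩
    refine ⟨?_, ?_, ?_, ?_⟩
    · intro hsq
      rw [StarlikeTIAux.sqE1 hn] at hsq
      obtain ⟨i, hi1, hib, hieq⟩ := hsq
      have hiA : i ≤ A := by omega
      have h1 := tv1 i hi1 hiA ⟨i, by omega⟩ rfl
      have h2 := tv3 1 (by omega) (by omega) ⟨A+B+1, by omega⟩ rfl
      have hval : 1*(1+(n-5)) = n - 4 := by omega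
      have heq : transmission (starlike A B 2) ⟨i, by omega⟩
          = transmission (starlike A B 2) ⟨A+B+1, by omega⟩ := by linarith
      have := hinj heq
      rw [Fin.ext_iff] at this
      simp only at this
      omega
    · intro hsq
      rw [StarlikeTIAux.sqE2 hn] at hsq
      obtain ⟨j, hj1, hjb, hjeq⟩ := hsq
      have hjB : j ≤ B := by omega
      have h1 := tv2 j hj1 hjB ⟨A+j, by omega⟩ rfl
      have h2 := tv3 1 (by omega) (by omega) ⟨A+B+1, by omega⟩ rfl
      have hval : 1*(1+(n-5)) = n - 4 := by omega
      have heq : transmission (starlike A B 2) ⟨A+j, by omega⟩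
          = transmission (starlike A B 2) ⟨A+B+1, by omega⟩ := by linarith
      have := hinj heq
      rw [Fin.ext_iff] at this
      simp only at this
      omega
    · intro hsq
      rw [StarlikeTIAux.sqE3 hn] at hsq
      obtain ⟨i, hi1, hib, hieq⟩ := hsq
      have hiA : i ≤ A := by omega
      have h1 := tv1 i hi1 hiA ⟨i, by omega⟩ rfl
      have h2 := tv3 2 (by omega) (by omega) ⟨A+B+2, by omega⟩ rfl
      have hval : 2*(2+(n-5)) = 2*n - 6 := by omega
      have heq : transmission (starlike A B 2) ⟨i, by omega⟩
          = transmission (starlike A B 2) ⟨A+B+2, by omega⟩ := by linarith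
      have := hinj heq
      rw [Fin.ext_iff] at this
      simp only at this
      omega
    · intro hsq
      rw [StarlikeTIAux.sqE4 hn] at hsq
      obtain ⟨j, hj1, hjb, hjeq⟩ := hsq
      have hjB : j ≤ B := by omega
      have h1 := tv2 j hj1 hjB ⟨A+j, by omega⟩ rfl
      have h2 := tv3 2 (by omega) (by omega) ⟨A+B+2, by omega⟩ rfl
      have hval : 2*(2+(n-5)) = 2*n - 6 := by omega
      have heq : transmission (starlike A B 2) ⟨A+j, by omega⟩
          = transmission (starlike A B 2) ⟨A+B+2, by omega⟩ := by linarith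
      have := hinj heq
      rw [Fin.ext_iff] at this
      simp only at this
      omega
  · rintro ⟨P1, P2, P3, P4⟩
    refine ⟨card2, ?_⟩
    have main : ∀ x y : Fin (A+B+2+1),
        transmission (starlike A B 2) x = transmission (starlike A B 2) y →
        x.val ≤ y.val → x.val = y.val := by
      intro x y hTr hle
      have hxlt := x.isLt
      have hylt := y.isLt
      have h2Tr : 2 * transmission (starlike A B 2) x
          = 2 * transmission (starlike A B 2) y := by omega
      rcases (show x.val = 0 ∨ (1 ≤ x.val ∧ x.val ≤ A) ∨ (A+1 ≤ x.val ∧ x.val ≤ A+B)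
          ∨ (A+B+1 ≤ x.val ∧ x.val ≤ A+B+2) by omega) with hx0 | hx1 | hx2 | hx3 <;>
        rcases (show y.val = 0 ∨ (1 ≤ y.val ∧ y.val ≤ A) ∨ (A+1 ≤ y.val ∧ y.val ≤ A+B)
          ∨ (A+B+1 ≤ y.val ∧ y.val ≤ A+B+2) by omega) with hy0 | hy1 | hy2 | hy3
      -- (0,0)
      · omega
      -- (0,1)
      · exfalso
        have e1 := tv0 x hx0
        have e2 := tv1 y.val hy1.1 hy1.2 y rfl
        have := StarlikeTIAux.Lpos1 hy1.1
        linarith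
      -- (0,2)
      · exfalso
        have e1 := tv0 x hx0
        have e2 := tv2 (y.val - A) (by omega) (by omega) y (by omega)
        have := StarlikeTIAux.Lpos2 (show 1 ≤ y.val - A by omega)
        linarith
      -- (0,3)
      · exfalso
        have e1 := tv0 x hx0
        have e2 := tv3 (y.val - A - B) (by omega) (by omega) y (by omega)
        have hge : 1*(1+(n-5)) ≤ (y.val - A - B)*((y.val - A - B)+(n-5)) := by
          rcases (show y.val - A - B = 1 ∨ y.val - A - B = 2 by omega) with h | h <;> rw [h] <;> omega
        have hpos : 9 ≤ 1*(1+(n-5)) := by omega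
        linarith
      -- (1,0)
      · omega
      -- (1,1)
      · have e1 := tv1 x.val hx1.1 hx1.2 x rfl
        have e2 := tv1 y.val hy1.1 hy1.2 y rfl
        have hgg : x.val*(x.val+1) = y.val*(y.val+1) := by linarith
        exact StarlikeTIAux.L11 hgg
      -- (1,2)
      · exfalso
        have e1 := tv1 x.val hx1.1 hx1.2 x rfl
        have e2 := tv2 (y.val - A) (by omega) (by omega) y (by omega)
        have hgg : x.val*(x.val+1) = (y.val - A)*((y.val - A)+3) := by linarith
        exact StarlikeTIAux.L12 hx1.1 (by omega) hgg
      -- (1,3)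
      · exfalso
        have e1 := tv1 x.val hx1.1 hx1.2 x rfl
        have e2 := tv3 (y.val - A - B) (by omega) (by omega) y (by omega)
        rcases (show y.val - A - B = 1 ∨ y.val - A - B = 2 by omega) with h | h
        · rw [h] at e2
          have hval : 1*(1+(n-5)) = n - 4 := by omega
          have hgg : x.val*(x.val+1) = n - 4 := by linarith
          exact P1 ((StarlikeTIAux.sqE1 hn).mpr ⟨x.val, hx1.1, by omega, hgg⟩)
        · rw [h] at e2
          have hval : 2*(2+(n-5)) = 2*n - 6 := by omega
          have hgg : x.val*(x.val+1) = 2*n - 6 := by linarith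
          exact P3 ((StarlikeTIAux.sqE3 hn).mpr ⟨x.val, hx1.1, by omega, hgg⟩)
      -- (2,0)
      · omega
      -- (2,1)
      · omega
      -- (2,2)
      · have e1 := tv2 (x.val - A) (by omega) (by omega) x (by omega)
        have e2 := tv2 (y.val - A) (by omega) (by omega) y (by omega)
        have hgg : (x.val - A)*((x.val - A)+3) = (y.val - A)*((y.val - A)+3) := by linarith
        have := StarlikeTIAux.L22 hgg
        omega
      -- (2,3)
      · exfalso
        have e1 := tv2 (x.val - A) (by omega) (by omega) x (by omega)
        have e2 := tv3 (y.val - A - B) (by omega) (by omega) y (by omega)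
        rcases (show y.val - A - B = 1 ∨ y.val - A - B = 2 by omega) with h | h
        · rw [h] at e2
          have hval : 1*(1+(n-5)) = n - 4 := by omega
          have hgg : (x.val - A)*((x.val - A)+3) = n - 4 := by linarith
          exact P2 ((StarlikeTIAux.sqE2 hn).mpr ⟨x.val - A, by omega, by omega, hgg⟩)
        · rw [h] at e2
          have hval : 2*(2+(n-5)) = 2*n - 6 := by omega
          have hgg : (x.val - A)*((x.val - A)+3) = 2*n - 6 := by linarith
          exact P4 ((StarlikeTIAux.sqE4 hn).mpr ⟨x.val - A, by omega, by omega, hgg⟩)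
      -- (3,0)
      · omega
      -- (3,1)
      · omega
      -- (3,2)
      · omega
      -- (3,3)
      · have e1 := tv3 (x.val - A - B) (by omega) (by omega) x (by omega)
        have e2 := tv3 (y.val - A - B) (by omega) (by omega) y (by omega)
        rcases (show x.val - A - B = 1 ∨ x.val - A - B = 2 by omega) with h | h <;>
          rcases (show y.val - A - B = 1 ∨ y.val - A - B = 2 by omega) with h' | h'
        · omega
        · exfalso
          rw [h] at e1; rw [h'] at e2
          have hval : 1*(1+(n-5)) + 4 ≤ 2*(2+(n-5)) := by omega
          linarith
        · omega
        · omega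
    intro x y h
    rcases le_total x.val y.val with hle | hle
    · exact Fin.ext (main x y h hle)
    · exact (Fin.ext (main y x h.symm hle)).symm
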